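/- Let (δ^t), (r^t), (s^t) be sequences of nonnegative reals with s⁰ = 0, and let a, b, c, d be nonnegative constants with b ≥ 1 and c > 0. Suppose δ^{t+1} + a s^{t+1} ≤ b δ^t + a s^t − c r^t + d for all t ≥ 0. Then for any T ≥ 1, min_{0 ≤ t ≤ T−1} r^t ≤ (b^T / (cT)) δ⁰ + d/c. -/
import Mathlib


theorem descent_recursion (δ r s : ℕ → ℝ) (a b c d : ℝ)
    (hδ : ∀ t, 0 ≤ δ t) (hr : ∀ t, 0 ≤ r t) (hs : ∀ t, 0 ≤ s t)
    (hs0 : s 0 = 0)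
    (ha : 0 ≤ a) (hb : 1 ≤ b) (hc : 0 < c) (hd : 0 ≤ d)
    (hrec : ∀ t, δ (t + 1) + a * s (t + 1) ≤ b * δ t + a * s t - c * r t + d)
    (T : ℕ) (hT : 1 ≤ T) :
    ∃ t < T, r t ≤ b ^ T / (c * T) * δ 0 + d / c := by
  have hb0 : (0:ℝ) ≤ b := le_trans zero_le_one hb
  have key : ∀ n, δ n + a * s n + c * ∑ t ∈ Finset.range n, b ^ (n - 1 - t) * r t
      ≤ b ^ n * δ 0 + d * ∑ t ∈ Finset.range n, b ^ (n - 1 - t) := by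
    intro n
    induction n with
    | zero => simp [hs0]
    | succ n ih =>
      have h1 := hrec n
      have hb' : a * s n ≤ b * (a * s n) :=
        le_mul_of_one_le_left (mul_nonneg ha (hs n)) hb
      have hbih := mul_le_mul_of_nonneg_left ih hb0
      have hsum : ∑ t ∈ Finset.range (n+1), b ^ (n + 1 - 1 - t) * r t
          = b * ∑ t ∈ Finset.range n, b ^ (n - 1 - t) * r t + r n := by
        rw [Finset.sum_range_succ, Finset.mul_sum]
        congr 1
        · apply Finset.sum_congr rfl
          intro t ht
          rw [Finset.mem_range] at ht
          rw [← mul_assoc, ← pow_succ']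
          congr 2
          omega
        · simp
      have hsum2 : ∑ t ∈ Finset.range (n+1), b ^ (n + 1 - 1 - t)
          = b * ∑ t ∈ Finset.range n, b ^ (n - 1 - t) + 1 := by
        rw [Finset.sum_range_succ, Finset.mul_sum]
        congr 1
        · apply Finset.sum_congr rfl
          intro t ht
          rw [Finset.mem_range] at ht
          rw [← pow_succ']
          congr 1
          omega
        · simp
      rw [hsum, hsum2, pow_succ']
      nlinarith [h1, hb', hbih]
  obtain ⟨t0, ht0, hmin⟩ := Finset.exists_min_image (Finset.range T) r
    ⟨0, Finset.mem_range.mpr hT⟩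
  rw [Finset.mem_range] at ht0
  refine ⟨t0, ht0, ?_⟩
  have hkey := key T
  set W := ∑ t ∈ Finset.range T, b ^ (T - 1 - t) with hW
  have hTW : (T : ℝ) ≤ W := by
    calc (T : ℝ) = ∑ t ∈ Finset.range T, (1:ℝ) := by simp
    _ ≤ W := by
        apply Finset.sum_le_sum
        intro i _
        exact one_le_pow₀ hb
  have hmW : r t0 * W ≤ ∑ t ∈ Finset.range T, b ^ (T - 1 - t) * r t := by
    rw [hW, Finset.mul_sum]
    apply Finset.sum_le_sum
    intro i hi
    rw [mul_comm]
    exact mul_le_mul_of_nonneg_left (hmin i hi) (pow_nonneg hb0 _)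
  have hV : 0 ≤ δ T + a * s T := add_nonneg (hδ T) (mul_nonneg ha (hs T))
  have hmain : c * (r t0 * W) ≤ b ^ T * δ 0 + d * W := by
    calc c * (r t0 * W) ≤ c * ∑ t ∈ Finset.range T, b ^ (T - 1 - t) * r t :=
          mul_le_mul_of_nonneg_left hmW hc.le
    _ ≤ b ^ T * δ 0 + d * W := by linarith
  -- case split on whether c * r t0 ≤ d
  have hT0 : (0:ℝ) < T := by exact_mod_cast hT
  by_cases hcase : c * r t0 ≤ d
  · have : r t0 ≤ d / c := by
      rw [le_div_iff₀ hc]; linarith [hcase]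
    have hnn : 0 ≤ b ^ T / (c * T) * δ 0 :=
      mul_nonneg (div_nonneg (pow_nonneg hb0 _) (by positivity)) (hδ 0)
    linarith
  · push_neg at hcase
    have h2 : (c * r t0 - d) * (T:ℝ) ≤ (c * r t0 - d) * W :=
      mul_le_mul_of_nonneg_left hTW (by linarith)
    have h3 : (c * r t0 - d) * (T:ℝ) ≤ b ^ T * δ 0 := by nlinarith
    rw [div_mul_eq_mul_div, div_add_div _ _ (by positivity : (c*(T:ℝ)) ≠ 0) hc.ne',
      le_div_iff₀ (by positivity)]
    ring_nf
    nlinarith [h3]
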